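/- Let n ≥ 1 and n* = n(n+1)/2, and let g₀ be a symmetric positive definite n×n matrix. Then there exist r > 0, unit vectors ν₁, …, ν_{n*} ∈ S^{n−1}, and linear maps L₁, …, L_{n*} from the space of symmetric n×n matrices to ℝ, such that g = Σ_{k=1}^{n*} L_k(g) ν_k ⊗ ν_k for every symmetric n×n matrix g, and such that L_k(g) ≥ r for every k and every symmetric positive definite g with |g − g₀| ≤ r. -/

import Mathlib

open Set

noncomputable section

open Matrix Finset

noncomputable section DecompAux
namespace DecompAux

variable {n : ℕ}

abbrev PIdx (n : ℕ) := {q : Fin n × Fin n // q.1 ≤ q.2}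

lemma card_PIdx (n : ℕ) : Fintype.card (PIdx n) = n * (n + 1) / 2 := by
  rw [← Fintype.card_congr (Sym2.sortEquiv (α := Fin n))]
  rw [Sym2.card]
  simp [Nat.choose_two_right, Nat.mul_comm]

def fvec (q : Fin n × Fin n) : Fin n → ℝ := fun x => if x = q.1 ∨ x = q.2 then 1 else 0

def cfun (q : Fin n × Fin n) (h : Matrix (Fin n) (Fin n) ℝ) : ℝ :=
  if q.1 = q.2 then 2 * h q.1 q.1 - ∑ j, h q.1 j else h q.1 q.2

lemma core_le (h : Matrix (Fin n) (Fin n) ℝ) (hs : h.IsSymm) (a b : Fin n) (hab : a ≤ b) :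
    ∑ q ∈ Finset.univ.filter (fun q : Fin n × Fin n => q.1 ≤ q.2),
      cfun q h * (fvec q a * fvec q b) = h a b := by
  rcases eq_or_lt_of_le hab with rfl | hab
  · -- diagonal case
    have hsq : ∀ q : Fin n × Fin n, cfun q h * (fvec q a * fvec q a)
        = if a = q.1 ∨ a = q.2 then cfun q h else 0 := by
      intro q; unfold fvec; split_ifs <;> ring
    simp_rw [hsq, ← Finset.sum_filter]
    set m : Fin n → Fin n × Fin n := fun x => if x ≤ a then (x, a) else (a, x) with hm
    have hmem : ∀ x : Fin n, (m x).1 ≤ (m x).2 ∧ (a = (m x).1 ∨ a = (m x).2) := by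
      intro x; simp only [hm]; split_ifs with hx
      · exact ⟨hx, Or.inr rfl⟩
      · exact ⟨le_of_not_ge hx, Or.inl rfl⟩
    have hset : ((Finset.univ.filter (fun q : Fin n × Fin n => q.1 ≤ q.2)).filter
        (fun q => a = q.1 ∨ a = q.2)) = Finset.univ.image m := by
      ext q
      simp only [Finset.mem_filter, Finset.mem_univ, true_and, Finset.mem_image]
      constructor
      · rintro ⟨hle, rfl | ha2⟩
        · refine ⟨q.2, ?_⟩
          simp only [hm]
          split_ifs with hx
          · have : q.2 = q.1 := le_antisymm hx hle
            exact Prod.ext this this.symm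
          · rfl
        · refine ⟨q.1, ?_⟩
          have hq1a : q.1 ≤ a := ha2 ▸ hle
          simp only [hm]
          rw [if_pos hq1a]
          exact Prod.ext rfl ha2
      · rintro ⟨x, rfl⟩
        exact hmem x
    rw [hset, Finset.sum_image]
    · rw [← Finset.sum_erase_add _ _ (Finset.mem_univ a)]
      have hma : m a = (a, a) := by simp [hm]
      have h1 : cfun (m a) h = 2 * h a a - ∑ j, h a j := by
        rw [hma]; simp [cfun]
      have h2 : ∑ x ∈ Finset.univ.erase a, cfun (m x) h
          = ∑ x ∈ Finset.univ.erase a, h a x := by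
        refine Finset.sum_congr rfl fun x hx => ?_
        have hxa : x ≠ a := (Finset.mem_erase.mp hx).1
        simp only [hm]
        split_ifs with hle
        · simp only [cfun]
          rw [if_neg (by exact hxa)]
          exact hs.apply a x
        · simp only [cfun]
          rw [if_neg (by exact fun hc => hle (le_of_eq hc.symm))]
      rw [h1, h2, Finset.sum_erase_eq_sub (Finset.mem_univ a)]
      ring
    · intro x _ y _ heq
      simp only [hm] at heq
      split_ifs at heq with hx hy hy
      · exact congrArg Prod.fst heq
      · exact (congrArg Prod.fst heq).trans (congrArg Prod.snd heq)
      · exact (congrArg Prod.snd heq).trans (congrArg Prod.fst heq)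
      · exact congrArg Prod.snd heq
  · -- off-diagonal a < b
    rw [Finset.sum_eq_single_of_mem (a, b)]
    · have hne : ¬ (a = b) := ne_of_lt hab
      simp [cfun, fvec, hne]
    · simp [le_of_lt hab]
    · rintro ⟨i, j⟩ hq hne
      simp only [Finset.mem_filter, Finset.mem_univ, true_and] at hq
      by_cases h1 : a = i ∨ a = j
      · by_cases h2 : b = i ∨ b = j
        · exfalso
          rcases h1 with rfl | rfl <;> rcases h2 with rfl | rfl
          · exact absurd rfl (ne_of_lt hab)
          · exact hne rfl
          · exact absurd (lt_of_lt_of_le hab hq) (lt_irrefl _)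
          · exact absurd rfl (ne_of_lt hab)
        · simp [fvec, h2]
      · simp [fvec, h1]

lemma decomp_matrix (h : Matrix (Fin n) (Fin n) ℝ) (hs : h.IsSymm) :
    h = ∑ q : PIdx n, cfun q.1 h • vecMulVec (fvec q.1) (fvec q.1) := by
  ext a b
  rw [Matrix.sum_apply]
  simp only [Matrix.smul_apply, vecMulVec_apply, smul_eq_mul]
  rw [eq_comm]
  have hsub : (∑ q ∈ Finset.univ.filter (fun q : Fin n × Fin n => q.1 ≤ q.2),
        cfun q h * (fvec q a * fvec q b))
      = ∑ q : PIdx n, cfun q.1 h * (fvec q.1 a * fvec q.1 b) :=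
    Finset.sum_subtype _ (by simp) _
  rw [← hsub]
  rcases le_total a b with hab | hba
  · exact core_le h hs a b hab
  · rw [Finset.sum_congr rfl fun q _ => by rw [mul_comm (fvec q a) (fvec q b)]]
    rw [core_le h hs b a hba]
    exact hs.apply a b

def Mmat (n : ℕ) : Matrix (Fin n) (Fin n) ℝ := Matrix.of fun i j => if i = j then (n : ℝ) else 1

lemma Mmat_posDef (hn : 1 ≤ n) : (Mmat n).PosDef := by
  refine Matrix.PosDef.of_dotProduct_mulVec_pos ?_ ?_
  · ext i j
    simp only [Mmat, conjTranspose_apply, Matrix.of_apply, star_trivial]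
    by_cases h : i = j <;> simp [h, eq_comm]
  · intro x hx
    have key : dotProduct (star x) ((Mmat n) *ᵥ x)
        = (∑ j, x j) ^ 2 + ((n : ℝ) - 1) * ∑ i, x i ^ 2 := by
      simp only [dotProduct, star_trivial, mulVec, dotProduct]
      have : ∀ i, ∑ j, (Mmat n) i j * x j = (∑ j, x j) + ((n : ℝ) - 1) * x i := by
        intro i
        have : ∀ j, (Mmat n) i j * x j = x j + (if j = i then ((n : ℝ) - 1) * x i else 0) := by
          intro j
          simp only [Mmat, Matrix.of_apply]
          by_cases h : i = j
          · subst h; simp; ring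
          · rw [if_neg h, if_neg (Ne.symm h)]; ring
        rw [Finset.sum_congr rfl fun j _ => this j, Finset.sum_add_distrib,
          Finset.sum_ite_eq' Finset.univ i (fun _ => ((n : ℝ) - 1) * x i)]
        simp
      rw [Finset.sum_congr rfl fun i _ => congrArg (x i * ·) (this i)]
      have expand : ∑ i, x i * ((∑ j, x j) + ((n : ℝ) - 1) * x i)
          = (∑ i, x i) * (∑ j, x j) + ((n : ℝ) - 1) * ∑ i, x i ^ 2 := by
        have e1 : ∀ i, x i * ((∑ j, x j) + ((n : ℝ) - 1) * x i)
            = x i * (∑ j, x j) + ((n : ℝ) - 1) * x i ^ 2 := fun i => by ring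
        rw [Finset.sum_congr rfl fun i _ => e1 i, Finset.sum_add_distrib, ← Finset.sum_mul,
          ← Finset.mul_sum]
      rw [expand]; ring
    rw [key]
    have hsumsq : 0 ≤ ∑ i, x i ^ 2 := Finset.sum_nonneg fun i _ => sq_nonneg _
    rcases eq_or_lt_of_le hn with h1 | h2
    · obtain rfl : n = 1 := h1.symm
      have hx0 : x 0 ≠ 0 := fun h => hx (funext fun i => by rw [Fin.eq_zero i]; exact h)
      have : (0:ℝ) < (x 0) ^ 2 := by positivity
      simpa using this
    · have hx' : ∃ i, x i ≠ 0 := Function.ne_iff.mp hx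
      obtain ⟨i, hi⟩ := hx'
      have hpos : 0 < ∑ i, x i ^ 2 :=
        Finset.sum_pos' (fun j _ => sq_nonneg _) ⟨i, Finset.mem_univ i, by positivity⟩
      have h2' : (0:ℝ) < (n : ℝ) - 1 := by
        have : (2:ℝ) ≤ (n:ℝ) := by exact_mod_cast h2
        linarith
      have := mul_pos h2' hpos
      nlinarith [sq_nonneg (∑ j, x j)]

open scoped MatrixOrder in
lemma exists_conj (g₀ M : Matrix (Fin n) (Fin n) ℝ) (hg₀ : g₀.PosDef) (hM : M.PosDef) :
    ∃ A B : Matrix (Fin n) (Fin n) ℝ, A * B = 1 ∧ B * A = 1 ∧ A * g₀ * Aᵀ = M := by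
  set S := CFC.sqrt g₀ with hS
  set T := CFC.sqrt M with hT
  have hSS : S * S = g₀ := CFC.sqrt_mul_sqrt_self g₀ hg₀.posSemidef.nonneg
  have hTT : T * T = M := CFC.sqrt_mul_sqrt_self M hM.posSemidef.nonneg
  have hSdet : IsUnit S.det := by
    have : S.det * S.det = g₀.det := by rw [← det_mul, hSS]
    have hg : g₀.det ≠ 0 := hg₀.det_pos.ne'
    exact isUnit_iff_ne_zero.mpr fun h => hg (by rw [← this, h, mul_zero])
  have hTdet : IsUnit T.det := by
    have : T.det * T.det = M.det := by rw [← det_mul, hTT]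
    have hg : M.det ≠ 0 := hM.det_pos.ne'
    exact isUnit_iff_ne_zero.mpr fun h => hg (by rw [← this, h, mul_zero])
  have hSsymm : Sᵀ = S := by
    have := (CFC.sqrt_nonneg g₀).posSemidef.1
    rwa [IsHermitian, conjTranspose_eq_transpose_of_trivial] at this
  have hTsymm : Tᵀ = T := by
    have := (CFC.sqrt_nonneg M).posSemidef.1
    rwa [IsHermitian, conjTranspose_eq_transpose_of_trivial] at this
  refine ⟨T * S⁻¹, S * T⁻¹, ?_, ?_, ?_⟩
  · rw [Matrix.mul_assoc, Matrix.nonsing_inv_mul_cancel_left _ _ hSdet,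
      Matrix.mul_nonsing_inv _ hTdet]
  · rw [Matrix.mul_assoc, Matrix.nonsing_inv_mul_cancel_left _ _ hTdet,
      Matrix.mul_nonsing_inv _ hSdet]
  · have hAT : (T * S⁻¹)ᵀ = S⁻¹ * T := by
      rw [transpose_mul, transpose_nonsing_inv, hSsymm, hTsymm]
    rw [hAT, ← hSS]
    simp only [Matrix.mul_assoc]
    rw [Matrix.mul_nonsing_inv_cancel_left _ _ hSdet,
      Matrix.nonsing_inv_mul_cancel_left _ _ hSdet, hTT]

def cLin (q : Fin n × Fin n) : Matrix (Fin n) (Fin n) ℝ →ₗ[ℝ] ℝ where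
  toFun := cfun q
  map_add' X Y := by
    unfold cfun
    split_ifs <;> simp [Matrix.add_apply, Finset.sum_add_distrib] <;> ring
  map_smul' r X := by
    simp only [RingHom.id_apply, smul_eq_mul]
    unfold cfun
    split_ifs
    · simp only [Matrix.smul_apply, smul_eq_mul]
      rw [mul_sub, Finset.mul_sum]; ring
    · simp [Matrix.smul_apply]

def gLin (A : Matrix (Fin n) (Fin n) ℝ) :
    Matrix (Fin n) (Fin n) ℝ →ₗ[ℝ] Matrix (Fin n) (Fin n) ℝ where
  toFun g := A * g * Aᵀ
  map_add' X Y := by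
    show A * (X + Y) * Aᵀ = A * X * Aᵀ + A * Y * Aᵀ
    rw [Matrix.mul_add, Matrix.add_mul]
  map_smul' r X := by
    show A * (r • X) * Aᵀ = r • (A * X * Aᵀ)
    rw [Matrix.mul_smul, Matrix.smul_mul]

lemma conj_vecMulVec (B : Matrix (Fin n) (Fin n) ℝ) (u : Fin n → ℝ) :
    B * vecMulVec u u * Bᵀ = vecMulVec (B *ᵥ u) (B *ᵥ u) := by
  ext a b
  simp only [Matrix.mul_apply, vecMulVec_apply, transpose_apply, mulVec, dotProduct,
    Finset.sum_mul, Finset.mul_sum]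
  refine Finset.sum_congr rfl fun y _ => Finset.sum_congr rfl fun x _ => by ring

end DecompAux
end DecompAux

open DecompAux

/-- **Decomposition into primitive metrics** (Lemma 4 of
Conti–De Lellis–Székelyhidi): near any positive definite `g₀` every symmetric
matrix can be written as `Σ_k L_k(g) ν_k ⊗ ν_k`, with coefficients `L_k(g)`
bounded below by `r > 0` on the ball `{|g − g₀| ≤ r}` of positive definite
matrices. -/
theorem decomposition_into_primitive_metrics
    (n : ℕ) (hn : 1 ≤ n)
    (g₀ : Matrix (Fin n) (Fin n) ℝ) (hg₀ : g₀.PosDef) :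
    ∃ r > (0 : ℝ),
      ∃ ν : Fin (n * (n + 1) / 2) → EuclideanSpace ℝ (Fin n),
      ∃ L : Fin (n * (n + 1) / 2) → (Matrix (Fin n) (Fin n) ℝ →ₗ[ℝ] ℝ),
        (∀ k, ‖ν k‖ = 1) ∧
        (∀ g : Matrix (Fin n) (Fin n) ℝ, g.IsSymm →
          g = ∑ k, L k g • Matrix.of fun i j => ν k i * ν k j) ∧
        (∀ k, ∀ g : Matrix (Fin n) (Fin n) ℝ, g.PosDef →
          (∀ i j, |g i j - g₀ i j| ≤ r) → r ≤ L k g) := by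
  classical
  haveI hne : Nonempty (PIdx n) :=
    ⟨⟨(⟨0, hn⟩, ⟨0, hn⟩), le_refl _⟩⟩
  have hM := Mmat_posDef hn
  obtain ⟨A, B, hAB, hBA, hconj⟩ := exists_conj g₀ (Mmat n) hg₀ hM
  -- the vectors
  set v : PIdx n → EuclideanSpace ℝ (Fin n) :=
    fun q => (WithLp.equiv 2 (Fin n → ℝ)).symm (B *ᵥ fvec q.1) with hv
  have hv_apply : ∀ (q : PIdx n) (i : Fin n), v q i = (B *ᵥ fvec q.1) i := fun q i => rfl
  have hv0 : ∀ q : PIdx n, v q ≠ 0 := by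
    intro q hq
    have h0 : B *ᵥ fvec q.1 = 0 := by
      funext i
      have := congrFun (congrArg (fun x : EuclideanSpace ℝ (Fin n) => (x : Fin n → ℝ)) hq) i
      exact this
    have : fvec q.1 = (0 : Fin n → ℝ) := by
      have h1 : A *ᵥ (B *ᵥ fvec q.1) = 0 := by rw [h0, Matrix.mulVec_zero]
      rwa [Matrix.mulVec_mulVec, hAB, Matrix.one_mulVec] at h1
    have : fvec q.1 q.1.1 = 0 := congrFun this q.1.1
    simp [fvec] at this
  have hnorm : ∀ q : PIdx n, ‖v q‖ ≠ 0 := fun q => norm_ne_zero_iff.mpr (hv0 q)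
  -- the linear maps
  set Lq : PIdx n → (Matrix (Fin n) (Fin n) ℝ →ₗ[ℝ] ℝ) :=
    fun q => (‖v q‖ ^ 2) • ((cLin q.1).comp (gLin A)) with hLq
  have hLq_apply : ∀ (q : PIdx n) (g : Matrix (Fin n) (Fin n) ℝ),
      Lq q g = ‖v q‖ ^ 2 * cfun q.1 (A * g * Aᵀ) := by
    intro q g; simp [hLq, cLin, gLin]
  -- value at g₀
  have hMcoef : ∀ q : PIdx n, cfun q.1 (Mmat n) = 1 := by
    rintro ⟨⟨i, j⟩, hij⟩
    rcases eq_or_lt_of_le hij with h | h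
    · simp only [cfun]
      rw [if_pos h]
      have hsum : ∑ k, (Mmat n) i k = 2 * (n : ℝ) - 1 := by
        have : ∀ k, (Mmat n) i k = 1 + (if k = i then ((n : ℝ) - 1) else 0) := by
          intro k
          simp only [Mmat, Matrix.of_apply]
          by_cases hk : i = k
          · subst hk; simp
          · rw [if_neg hk, if_neg (Ne.symm hk)]; ring
        rw [Finset.sum_congr rfl fun k _ => this k, Finset.sum_add_distrib,
          Finset.sum_ite_eq' Finset.univ i (fun _ => ((n : ℝ) - 1))]
        have hcard : (Finset.univ : Finset (Fin n)).card = n := by simp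
        simp [hcard]
        ring
      have hdiag : (Mmat n) i i = (n : ℝ) := by simp [Mmat]
      rw [hsum, hdiag]
      ring
    · simp only [cfun]
      rw [if_neg (ne_of_lt h)]
      simp only [Mmat, Matrix.of_apply]
      rw [if_neg (ne_of_lt h)]
  have hLg₀ : ∀ q : PIdx n, Lq q g₀ = ‖v q‖ ^ 2 := by
    intro q
    rw [hLq_apply, hconj, hMcoef, mul_one]
  have hwpos : ∀ q : PIdx n, 0 < ‖v q‖ ^ 2 := by
    intro q
    have := hnorm q
    positivity
  -- bounds
  set Sb : ℝ := ∑ q : PIdx n, ∑ i, ∑ j, |Lq q (Matrix.single i j 1)| with hSb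
  have hSb0 : 0 ≤ Sb :=
    Finset.sum_nonneg fun q _ => Finset.sum_nonneg fun i _ =>
      Finset.sum_nonneg fun j _ => abs_nonneg _
  set ε : ℝ := Finset.univ.inf' Finset.univ_nonempty (fun q : PIdx n => ‖v q‖ ^ 2) with hε
  have hεpos : 0 < ε := by
    rw [hε, Finset.lt_inf'_iff]
    exact fun q _ => hwpos q
  set r : ℝ := ε / (Sb + 2) with hr
  have hrpos : 0 < r := div_pos hεpos (by linarith)
  have hεr : ε = r * (Sb + 2) := by
    rw [hr]; field_simp
  -- the equivalence with Fin N
  have hcard : Fintype.card (PIdx n) = n * (n + 1) / 2 := card_PIdx n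
  set e : Fin (n * (n + 1) / 2) ≃ PIdx n := (Fintype.equivFinOfCardEq hcard).symm with he
  refine ⟨r, hrpos, fun k => (‖v (e k)‖⁻¹ : ℝ) • v (e k), fun k => Lq (e k), ?_, ?_, ?_⟩
  · intro k
    exact norm_smul_inv_norm (𝕜 := ℝ) (hv0 (e k))
  · -- decomposition
    intro g hg
    set H : Matrix (Fin n) (Fin n) ℝ := A * g * Aᵀ with hH
    have hHsymm : H.IsSymm := by
      rw [Matrix.IsSymm, hH, transpose_mul, transpose_mul, transpose_transpose, hg.eq,
        ← Matrix.mul_assoc]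
    have hgH : g = B * H * Bᵀ := by
      have h1 : Aᵀ * Bᵀ = 1 := by rw [← transpose_mul, hBA, transpose_one]
      rw [hH]
      simp only [Matrix.mul_assoc]
      rw [h1, Matrix.mul_one, ← Matrix.mul_assoc, hBA, Matrix.one_mul]
    have hdec := decomp_matrix H hHsymm
    have key : g = ∑ q : PIdx n,
        cfun q.1 H • vecMulVec (B *ᵥ fvec q.1) (B *ᵥ fvec q.1) := by
      conv_lhs => rw [hgH, hdec]
      rw [Matrix.mul_sum, Matrix.sum_mul]
      refine Finset.sum_congr rfl fun q _ => ?_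
      rw [Matrix.mul_smul, Matrix.smul_mul, conj_vecMulVec]
    refine key.trans (Eq.symm (Fintype.sum_equiv e _ _ fun k => ?_))
    ext i j
    simp only [Matrix.smul_apply, Matrix.of_apply, vecMulVec_apply, smul_eq_mul,
      PiLp.smul_apply]
    rw [hLq_apply]
    have h1 : v (e k) i = (B *ᵥ fvec (e k).1) i := rfl
    have h2 : v (e k) j = (B *ᵥ fvec (e k).1) j := rfl
    rw [h1, h2]
    have hn0 := hnorm (e k)
    field_simp
    ring
  · -- lower bound
    intro k g _ hclose
    set q := e k with hq
    set d : Matrix (Fin n) (Fin n) ℝ := g - g₀ with hd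
    have hdle : ∀ i j, |d i j| ≤ r := by
      intro i j; simpa [hd, Matrix.sub_apply] using hclose i j
    have hsplit : Lq q g = Lq q g₀ + Lq q d := by
      rw [hd, map_sub]; ring
    have hdsum : Lq q d = ∑ i, ∑ j, d i j * Lq q (Matrix.single i j 1) := by
      conv_lhs => rw [Matrix.matrix_eq_sum_single d]
      rw [map_sum]
      refine Finset.sum_congr rfl fun i _ => ?_
      rw [map_sum]
      refine Finset.sum_congr rfl fun j _ => ?_
      have : Matrix.single i j (d i j) = d i j • Matrix.single i j 1 := by
        rw [Matrix.smul_single, smul_eq_mul, mul_one]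
      rw [this, _root_.map_smul, smul_eq_mul]
    have hbound : |Lq q d| ≤ r * Sb := by
      rw [hdsum]
      calc |∑ i, ∑ j, d i j * Lq q (Matrix.single i j 1)|
          ≤ ∑ i, |∑ j, d i j * Lq q (Matrix.single i j 1)| :=
            Finset.abs_sum_le_sum_abs _ _
        _ ≤ ∑ i, ∑ j, |d i j * Lq q (Matrix.single i j 1)| :=
            Finset.sum_le_sum fun i _ => Finset.abs_sum_le_sum_abs _ _
        _ ≤ ∑ i, ∑ j, r * |Lq q (Matrix.single i j 1)| := by
            refine Finset.sum_le_sum fun i _ => Finset.sum_le_sum fun j _ => ?_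
            rw [abs_mul]
            exact mul_le_mul_of_nonneg_right (hdle i j) (abs_nonneg _)
        _ = r * ∑ i, ∑ j, |Lq q (Matrix.single i j 1)| := by
            rw [Finset.mul_sum]
            exact Finset.sum_congr rfl fun i _ => by rw [Finset.mul_sum]
        _ ≤ r * Sb := by
            refine mul_le_mul_of_nonneg_left ?_ (le_of_lt hrpos)
            rw [hSb]
            refine Finset.single_le_sum (f := fun q : PIdx n =>
              ∑ i, ∑ j, |Lq q (Matrix.single i j 1)|) ?_ (Finset.mem_univ q)
            exact fun p _ => Finset.sum_nonneg fun i _ => Finset.sum_nonneg fun j _ => abs_nonneg _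
    have hεq : ε ≤ ‖v q‖ ^ 2 := Finset.inf'_le _ (Finset.mem_univ q)
    have h1 : Lq q g₀ = ‖v q‖ ^ 2 := hLg₀ q
    have h2 := abs_le.mp hbound
    rw [hsplit, h1]
    have : r * (Sb + 2) ≤ ‖v q‖ ^ 2 := hεr ▸ hεq
    linarith [h2.1]
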